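/- Let w be a weight on ℝⁿ and p > 0. Suppose there exist constants 0 < C < 1 and 0 < λ₀ < 1 such that for every bounded measurable set E of positive measure, ∫(Mχ_E)^p w ≤ C ∫(Mχ_{{Mχ_E>λ₀}})^p w. Then there exist C' > 0 and δ > 0 such that for every bounded measurable set E of positive measure and every λ ∈ (0,1), w(E) ≤ C' λ^δ ∫(Mχ_{{Mχ_E>λ}})^p w. One may take δ = log C / log(λ₀/9^n). -/

import Mathlib

open MeasureTheory Metric Set Bornology
open scoped ENNReal

/-- The uncentered Hardy–Littlewood maximal operator over cubes (= closed balls in the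
sup metric on `ℝⁿ = Fin n → ℝ`), acting on `ℝ≥0∞`-valued functions. -/
noncomputable def maximal {n : ℕ} (f : (Fin n → ℝ) → ℝ≥0∞) (x : Fin n → ℝ) : ℝ≥0∞ :=
  ⨆ (c : Fin n → ℝ) (r : ℝ) (_ : 0 < r) (_ : x ∈ closedBall c r),
    (volume (closedBall c r))⁻¹ * ∫⁻ y in closedBall c r, f y

/-- `Mχ_E`, the maximal function of the indicator of a set `E`. -/
noncomputable def maximalInd {n : ℕ} (E : Set (Fin n → ℝ)) (x : Fin n → ℝ) : ℝ≥0∞ :=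
  maximal (E.indicator 1) x

open Filter
open scoped Topology

namespace Stmt7Aux

variable {n : ℕ}

lemma vol_cb (c : Fin n → ℝ) {r : ℝ} (hr : 0 ≤ r) :
    volume (closedBall c r) = ENNReal.ofReal ((2*r)^n) := by
  simpa using Real.volume_pi_closedBall c hr

lemma vol_cb_pos (c : Fin n → ℝ) {r : ℝ} (hr : 0 < r) :
    0 < volume (closedBall c r) := by
  rw [vol_cb c hr.le]
  simp [ENNReal.ofReal_pos]
  positivity

lemma vol_cb_ne_top (c : Fin n → ℝ) (r : ℝ) :
    volume (closedBall c r) ≠ ⊤ := by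
  rcases le_or_gt 0 r with h | h
  · rw [vol_cb c h]; exact ENNReal.ofReal_ne_top
  · rw [closedBall_eq_empty.2 h]; simp

lemma le_maximal (f : (Fin n → ℝ) → ℝ≥0∞) {c x : Fin n → ℝ} {r : ℝ}
    (hr : 0 < r) (hx : x ∈ closedBall c r) :
    (volume (closedBall c r))⁻¹ * ∫⁻ y in closedBall c r, f y ≤ maximal f x := by
  refine le_trans ?_ (le_iSup _ c)
  refine le_trans ?_ (le_iSup _ r)
  refine le_trans ?_ (le_iSup _ hr)
  exact le_iSup (fun (_ : x ∈ closedBall c r) => _) hx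

lemma lint_ind {E : Set (Fin n → ℝ)} (hE : MeasurableSet E) (B : Set (Fin n → ℝ)) :
    ∫⁻ y in B, E.indicator 1 y = volume (E ∩ B) := by
  rw [lintegral_indicator hE]
  simp [Measure.restrict_restrict hE]

lemma ratio_le_maximalInd {E : Set (Fin n → ℝ)} (hE : MeasurableSet E)
    {c x : Fin n → ℝ} {r : ℝ} (hr : 0 < r) (hx : x ∈ closedBall c r) :
    (volume (closedBall c r))⁻¹ * volume (E ∩ closedBall c r) ≤ maximalInd E x := by
  have := le_maximal (E.indicator 1) hr hx
  rwa [lint_ind hE] at this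

lemma maximalInd_mono {E F : Set (Fin n → ℝ)} (hEF : E ⊆ F) (x : Fin n → ℝ) :
    maximalInd E x ≤ maximalInd F x := by
  refine iSup_mono fun c => iSup_mono fun r => iSup_mono fun hr => iSup_mono fun hx => ?_
  gcongr

lemma inv_mul_ofReal {a b : ℝ} (hb : 0 < b) :
    (ENNReal.ofReal b)⁻¹ * ENNReal.ofReal a = ENNReal.ofReal (a / b) := by
  rw [ENNReal.ofReal_div_of_pos hb, div_eq_mul_inv, mul_comm]

lemma isOpen_maximal_gt (f : (Fin n → ℝ) → ℝ≥0∞) (a : ℝ≥0∞) :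
    IsOpen {x | a < maximal f x} := by
  rw [isOpen_iff_mem_nhds]
  intro x hx
  simp only [mem_setOf_eq, maximal, lt_iSup_iff] at hx
  obtain ⟨c, r, hr, hxB, hval⟩ := hx
  set I := ∫⁻ y in closedBall c r, f y with hI
  obtain ⟨r', hrr', hval'⟩ :
      ∃ r', r < r' ∧ a < (volume (closedBall c r'))⁻¹ * I := by
    rcases eq_or_ne I ⊤ with hIt | hIt
    · refine ⟨r + 1, by linarith, ?_⟩
      rw [hIt, ENNReal.mul_top (ENNReal.inv_ne_zero.2 (vol_cb_ne_top c _))]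
      exact lt_of_lt_of_le hval le_top
    · set t := I.toReal with ht
      have hIofReal : I = ENNReal.ofReal t := (ENNReal.ofReal_toReal hIt).symm
      have hform : ∀ s : ℝ, 0 < s →
          (volume (closedBall c s))⁻¹ * I = ENNReal.ofReal (t / (2*s)^n) := by
        intro s hs
        rw [vol_cb c hs.le, hIofReal, inv_mul_ofReal (by positivity)]
      have hg : ContinuousAt (fun s : ℝ => ENNReal.ofReal (t / (2*s)^n)) r := by
        apply ENNReal.continuous_ofReal.continuousAt.comp
        exact continuousAt_const.div (by fun_prop) (by positivity)
      have hmem : {s : ℝ | a < ENNReal.ofReal (t / (2*s)^n)} ∈ 𝓝 r := by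
        apply hg.preimage_mem_nhds (t := Ioi a)
        apply Ioi_mem_nhds
        rw [← hform r hr]; exact hval
      have hmem' : {s : ℝ | a < ENNReal.ofReal (t / (2*s)^n)} ∈ 𝓝[>] r :=
        nhdsWithin_le_nhds hmem
      obtain ⟨r', hr'1, hr'2⟩ :=
        Filter.nonempty_of_mem (Filter.inter_mem hmem' self_mem_nhdsWithin)
      refine ⟨r', hr'2, ?_⟩
      rw [hform r' (hr.trans hr'2)]
      exact hr'1
  have hsub : ball c r' ⊆ {x | a < maximal f x} := by
    intro z hz
    have hz' : z ∈ closedBall c r' := ball_subset_closedBall hz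
    have h1 : (volume (closedBall c r'))⁻¹ * I ≤
        (volume (closedBall c r'))⁻¹ * ∫⁻ y in closedBall c r', f y := by
      gcongr
      exact lintegral_mono_set (closedBall_subset_closedBall hrr'.le)
    exact lt_of_lt_of_le hval' (h1.trans (le_maximal f (hr.trans hrr') hz'))
  exact Filter.mem_of_superset
    (isOpen_ball.mem_nhds (mem_ball.2 (lt_of_le_of_lt (mem_closedBall.1 hxB) hrr'))) hsub

lemma isBounded_H {E : Set (Fin n → ℝ)} (hEb : IsBounded E) {l : ℝ} (hl : 0 < l) :
    IsBounded {x | ENNReal.ofReal l < maximalInd E x} := by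
  rcases Nat.eq_zero_or_pos n with hn | hn
  · have : Subsingleton (Fin n → ℝ) := by subst hn; infer_instance
    exact Set.subsingleton_of_subsingleton.finite.isBounded
  obtain ⟨R0, hE0⟩ := hEb.subset_closedBall 0
  set R : ℝ := max R0 1 with hRdef
  have hR1 : (1:ℝ) ≤ R := le_max_right _ _
  have hER : E ⊆ closedBall 0 R := hE0.trans (closedBall_subset_closedBall (le_max_left _ _))
  obtain ⟨M0, hM0⟩ := exists_nat_ge (1/l)
  set M : ℝ := max (M0 : ℝ) 1 with hMdef
  have hM1 : (1:ℝ) ≤ M := le_max_right _ _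
  have hMl : 1/l ≤ M := hM0.trans (le_max_left _ _)
  have hMn : 1/l ≤ M^n := by
    calc 1/l ≤ M := hMl
    _ = M^1 := (pow_one M).symm
    _ ≤ M^n := pow_le_pow_right₀ (by linarith) hn
  set R' : ℝ := R + 2*R*M with hR'def
  apply IsBounded.subset (isBounded_closedBall (x := (0 : Fin n → ℝ)) (r := R'))
  intro x hx
  by_contra hxout
  have hxfar : R' < dist x 0 := by
    simpa [mem_closedBall] using hxout
  have hbound : maximalInd E x ≤ ENNReal.ofReal l := by
    refine iSup_le fun c => iSup_le fun r => iSup_le fun hr => iSup_le fun hxB => ?_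
    by_cases hEB : (E ∩ closedBall c r).Nonempty
    · obtain ⟨z, hzE, hzB⟩ := hEB
      have h2r : 2*R*M < 2*r := by
        have h1 : dist x z ≤ 2*r := by
          have ht := dist_triangle x c z
          have hxc : dist x c ≤ r := mem_closedBall.1 hxB
          have hzc : dist c z ≤ r := by rw [dist_comm]; exact mem_closedBall.1 hzB
          linarith
        have h2 : dist z 0 ≤ R := mem_closedBall.1 (hER hzE)
        have h3 : dist x 0 ≤ dist x z + dist z 0 := dist_triangle _ _ _
        have := hxfar
        rw [hR'def] at this
        linarith
      have hint : ∫⁻ y in closedBall c r, E.indicator 1 y ≤ ENNReal.ofReal ((2*R)^n) := by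
        calc ∫⁻ y in closedBall c r, E.indicator 1 y
            ≤ ∫⁻ y in closedBall c r, (closedBall (0 : Fin n → ℝ) R).indicator 1 y :=
          lintegral_mono fun y =>
            Set.indicator_le_indicator_of_subset hER (fun _ => zero_le) y
        _ = volume (closedBall (0 : Fin n → ℝ) R ∩ closedBall c r) :=
          lint_ind measurableSet_closedBall _
        _ ≤ volume (closedBall (0 : Fin n → ℝ) R) := measure_mono inter_subset_left
        _ = ENNReal.ofReal ((2*R)^n) := vol_cb _ (by positivity)
      have hineq : (2*R)^n/(2*r)^n ≤ l := by
        have hpowlt : (2*R*M)^n ≤ (2*r)^n :=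
          pow_le_pow_left₀ (by positivity) h2r.le n
        have hMnpos : (0:ℝ) < M^n := by positivity
        calc (2*R)^n/(2*r)^n ≤ (2*R)^n/(2*R*M)^n := by
              apply div_le_div_of_nonneg_left (by positivity) (by positivity) hpowlt
        _ = 1/M^n := by
              rw [mul_pow]
              rw [div_eq_div_iff (by positivity) (by positivity)]
              ring
        _ ≤ l := by
              rw [div_le_iff₀ hMnpos]
              rw [div_le_iff₀ hl] at hMn
              nlinarith
      calc (volume (closedBall c r))⁻¹ * ∫⁻ y in closedBall c r, E.indicator 1 y
          ≤ (volume (closedBall c r))⁻¹ * ENNReal.ofReal ((2*R)^n) := by gcongr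
      _ = ENNReal.ofReal ((2*R)^n / (2*r)^n) := by
          rw [vol_cb c hr.le, inv_mul_ofReal (by positivity)]
      _ ≤ ENNReal.ofReal l := ENNReal.ofReal_le_ofReal hineq
    · have hzero : ∫⁻ y in closedBall c r, E.indicator 1 y = 0 := by
        have : ∀ᵐ y ∂(volume.restrict (closedBall c r)),
            E.indicator (1 : (Fin n → ℝ) → ℝ≥0∞) y = 0 := by
          refine (ae_restrict_iff' measurableSet_closedBall).2 (ae_of_all _ fun y hy => ?_)
          exact indicator_of_notMem (fun hyE => hEB ⟨y, hyE, hy⟩) _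
        calc ∫⁻ y in closedBall c r, E.indicator 1 y
            = ∫⁻ _ in closedBall c r, 0 := lintegral_congr_ae (this.mono fun y hy => hy)
        _ = 0 := lintegral_zero
      rw [hzero, mul_zero]; exact zero_le
  rw [mem_setOf_eq] at hx
  exact absurd (lt_of_lt_of_le hx hbound) (lt_irrefl _)

lemma ae_mem_H {E : Set (Fin n → ℝ)} (hE : MeasurableSet E) {l : ℝ} (hl1 : l < 1) :
    volume (E \ {x | ENNReal.ofReal l < maximalInd E x}) = 0 := by
  set H := {x | ENNReal.ofReal l < maximalInd E x} with hHdef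
  have hae := Besicovitch.ae_tendsto_measure_inter_div (volume : Measure (Fin n → ℝ)) E
  have hmemae : ∀ᵐ x ∂(volume : Measure (Fin n → ℝ)).restrict E, x ∈ H := by
    filter_upwards [hae] with x hx
    have hlt : (ENNReal.ofReal l) < 1 := by
      rw [← ENNReal.ofReal_one]
      exact ENNReal.ofReal_lt_ofReal_iff one_pos |>.2 hl1
    have hev : ∀ᶠ ρ in 𝓝[>] (0:ℝ),
        ENNReal.ofReal l < volume (E ∩ closedBall x ρ) / volume (closedBall x ρ) :=
      hx.eventually (lt_mem_nhds hlt)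
    obtain ⟨ρ, hρ1, hρ2⟩ :=
      Filter.nonempty_of_mem (Filter.inter_mem hev self_mem_nhdsWithin)
    have hρpos : (0:ℝ) < ρ := hρ2
    have hle : volume (E ∩ closedBall x ρ) / volume (closedBall x ρ) ≤ maximalInd E x := by
      rw [div_eq_mul_inv, mul_comm]
      exact ratio_le_maximalInd hE hρpos (mem_closedBall_self hρpos.le)
    exact lt_of_lt_of_le hρ1 hle
  have h0 : (volume : Measure (Fin n → ℝ)).restrict E Hᶜ = 0 := by
    have := ae_iff.1 hmemae
    exact this
  have hHmeas : MeasurableSet H := (isOpen_maximal_gt _ _).measurableSet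
  rw [Measure.restrict_apply hHmeas.compl] at h0
  rw [diff_eq, inter_comm]
  exact h0

lemma one_le_maximalInd_of_open {G : Set (Fin n → ℝ)} (hG : IsOpen G)
    {x : Fin n → ℝ} (hx : x ∈ G) : 1 ≤ maximalInd G x := by
  obtain ⟨ε, hε, hball⟩ := Metric.isOpen_iff.1 hG x hx
  have hsub : closedBall x (ε/2) ⊆ G :=
    (closedBall_subset_ball (by linarith)).trans hball
  have h1 := ratio_le_maximalInd (E := G) (c := x) (x := x) (r := ε/2) hG.measurableSet
    (by linarith) (mem_closedBall_self (by linarith))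
  rw [inter_eq_self_of_subset_right hsub,
    ENNReal.inv_mul_cancel (vol_cb_pos x (show 0 < ε/2 by linarith)).ne'
      (vol_cb_ne_top x _)] at h1
  exact h1

lemma key {E : Set (Fin n → ℝ)} (hE : MeasurableSet E) {α : ℝ} (hα : 0 < α)
    (x : Fin n → ℝ) :
    maximalInd {y | ENNReal.ofReal α < maximalInd E y} x ≤
      ENNReal.ofReal ((12:ℝ)^n / α) * maximalInd E x := by
  set G := {y | ENNReal.ofReal α < maximalInd E y} with hGdef
  have hGopen : IsOpen G := isOpen_maximal_gt _ _
  have hαne0 : ENNReal.ofReal α ≠ 0 := by simp [hα]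
  have hαnetop : ENNReal.ofReal α ≠ ⊤ := ENNReal.ofReal_ne_top
  refine iSup_le fun c => iSup_le fun r => iSup_le fun hr => iSup_le fun hx => ?_
  set Q := closedBall c r with hQdef
  set T := Q ∩ G with hTdef
  -- choose, for each point of T, a ball witnessing membership in G
  have hch : ∀ y : T, ∃ cr : (Fin n → ℝ) × ℝ, 0 < cr.2 ∧ (y : Fin n → ℝ) ∈ closedBall cr.1 cr.2 ∧
      ENNReal.ofReal α * volume (closedBall cr.1 cr.2) < volume (E ∩ closedBall cr.1 cr.2) := by
    rintro ⟨y, hyQ, hyG⟩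
    rw [hGdef, mem_setOf_eq, maximalInd, maximal] at hyG
    rw [lt_iSup_iff] at hyG; obtain ⟨cy, hyG⟩ := hyG
    rw [lt_iSup_iff] at hyG; obtain ⟨ry, hyG⟩ := hyG
    rw [lt_iSup_iff] at hyG; obtain ⟨hry, hyG⟩ := hyG
    rw [lt_iSup_iff] at hyG; obtain ⟨hmem, hyG⟩ := hyG
    rw [lint_ind hE] at hyG
    refine ⟨(cy, ry), hry, hmem, ?_⟩
    have h1 : (volume (closedBall cy ry))⁻¹ * volume (E ∩ closedBall cy ry)
        = volume (E ∩ closedBall cy ry) / volume (closedBall cy ry) := by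
      rw [div_eq_mul_inv, mul_comm]
    rw [h1] at hyG
    exact (ENNReal.lt_div_iff_mul_lt (Or.inl (vol_cb_pos cy hry).ne')
      (Or.inl (vol_cb_ne_top cy ry))).1 hyG
  choose b hb1 hb2 hb3 using hch
  set cf : T → (Fin n → ℝ) := fun y => (b y).1 with hcf
  set rf : T → ℝ := fun y => (b y).2 with hrf
  by_cases hcase : ∃ y : T, r < rf y
  · -- some chosen ball is large: the maximal function of E at x is already ≥ α/3^n
    obtain ⟨y, hy⟩ := hcase
    have hterm1 : (volume Q)⁻¹ * ∫⁻ z in Q, G.indicator 1 z ≤ 1 := by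
      rw [lint_ind hGopen.measurableSet]
      calc (volume Q)⁻¹ * volume (G ∩ Q) ≤ (volume Q)⁻¹ * volume Q := by
            gcongr
            exact inter_subset_right
      _ = 1 := ENNReal.inv_mul_cancel (vol_cb_pos c hr).ne' (vol_cb_ne_top c r)
    have hry : 0 < rf y := hb1 y
    have hxB' : x ∈ closedBall (cf y) (3 * rf y) := by
      rw [mem_closedBall]
      have h1 : dist x (cf y) ≤ dist x (y : Fin n → ℝ) + dist (y : Fin n → ℝ) (cf y) :=
        dist_triangle _ _ _
      have hxy : dist x (y : Fin n → ℝ) ≤ 2*r := by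
        have h2 : dist x (y : Fin n → ℝ) ≤ dist x c + dist c (y : Fin n → ℝ) :=
          dist_triangle _ _ _
        have h3 : dist x c ≤ r := mem_closedBall.1 hx
        have h4 : dist c (y : Fin n → ℝ) ≤ r := by
          rw [dist_comm]; exact mem_closedBall.1 y.2.1
        linarith
      have h5 : dist (y : Fin n → ℝ) (cf y) ≤ rf y := mem_closedBall.1 (hb2 y)
      linarith
    have hlow : ENNReal.ofReal (α / 3^n) ≤ maximalInd E x := by
      have h0 : (0:ℝ) < 3 * rf y := by linarith
      have h1 := ratio_le_maximalInd hE h0 hxB'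
      have h2 : ENNReal.ofReal α * volume (closedBall (cf y) (rf y)) ≤
          volume (E ∩ closedBall (cf y) (3 * rf y)) :=
        (hb3 y).le.trans (measure_mono
          (inter_subset_inter_right _ (closedBall_subset_closedBall (by linarith))))
      have h3 : ENNReal.ofReal (α / 3^n) =
          (volume (closedBall (cf y) (3 * rf y)))⁻¹ *
            (ENNReal.ofReal α * volume (closedBall (cf y) (rf y))) := by
        rw [vol_cb _ h0.le, vol_cb _ hry.le, ← ENNReal.ofReal_mul hα.le,
          inv_mul_ofReal (by positivity)]
        congr 1
        simp only [mul_pow]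
        rw [div_eq_div_iff (by positivity) (by positivity)]
        ring
      rw [h3]
      refine le_trans ?_ h1
      gcongr
    refine hterm1.trans ?_
    have h4 : (1:ℝ≥0∞) ≤ ENNReal.ofReal ((12:ℝ)^n / α) * ENNReal.ofReal (α / 3^n) := by
      rw [← ENNReal.ofReal_mul (by positivity)]
      have heq : (12:ℝ)^n/α * (α/3^n) = 4^n := by
        rw [div_mul_div_comm, show (12:ℝ) = 4*3 by norm_num, mul_pow,
          div_eq_iff (by positivity)]
        ring
      rw [heq]
      exact ENNReal.one_le_ofReal.2 (one_le_pow₀ (by norm_num))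
    refine h4.trans ?_
    gcongr
  · -- all chosen balls are small: Vitali covering argument
    push_neg at hcase
    obtain ⟨u, hu_sub, hu_disj, hu_cov⟩ :=
      Vitali.exists_disjoint_subfamily_covering_enlargement_closedBall (univ : Set T)
        cf rf r (fun y _ => hcase y) 4 (by norm_num)
    have hB3Q : ∀ y : T, closedBall (cf y) (rf y) ⊆ closedBall c (3*r) := by
      intro y z hz
      rw [mem_closedBall]
      have h1 : dist z c ≤ dist z (cf y) + dist (cf y) (y : Fin n → ℝ) +
          dist (y : Fin n → ℝ) c := dist_triangle4 _ _ _ _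
      have h2 : dist z (cf y) ≤ rf y := mem_closedBall.1 hz
      have h3 : dist (cf y) (y : Fin n → ℝ) ≤ rf y := by
        rw [dist_comm]; exact mem_closedBall.1 (hb2 y)
      have h4 : dist (y : Fin n → ℝ) c ≤ r := mem_closedBall.1 y.2.1
      have h5 := hcase y
      linarith
    have hdisj' : Pairwise (Function.onFun Disjoint fun i : ↥u => closedBall (cf i) (rf i)) := by
      intro i j hij
      exact hu_disj i.2 j.2 (fun hc => hij (Subtype.ext hc))
    have hcnt : u.Countable := by
      have hc := MeasureTheory.Measure.countable_meas_pos_of_disjoint_iUnion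
        (μ := (volume : Measure (Fin n → ℝ)))
        (As := fun i : ↥u => closedBall (cf i) (rf i))
        (fun i => measurableSet_closedBall) hdisj'
      have huniv : {i : ↥u | 0 < volume (closedBall (cf (i : T)) (rf (i : T)))} = univ :=
        eq_univ_of_forall fun i => vol_cb_pos _ (hb1 i)
      rw [huniv, countable_univ_iff] at hc
      exact countable_coe_iff.1 hc
    have hTcov : T ⊆ ⋃ y ∈ u, closedBall (cf y) (4 * rf y) := by
      intro z hz
      obtain ⟨y, hyu, hsub⟩ := hu_cov ⟨z, hz⟩ (mem_univ _)
      exact mem_biUnion hyu (hsub (hb2 ⟨z, hz⟩))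
    have h1 : volume T ≤ ∑' y : ↥u, volume (closedBall (cf y) (4 * rf y)) :=
      (measure_mono hTcov).trans (measure_biUnion_le _ hcnt _)
    have h2 : ∀ y : ↥u, volume (closedBall (cf (y : T)) (4 * rf (y : T))) ≤
        ENNReal.ofReal ((4:ℝ)^n) *
          ((ENNReal.ofReal α)⁻¹ * volume (E ∩ closedBall (cf (y : T)) (rf (y : T)))) := by
      intro y
      have hry : 0 < rf (y : T) := hb1 _
      have hv4 : volume (closedBall (cf (y : T)) (4 * rf (y : T))) =
          ENNReal.ofReal ((4:ℝ)^n) * volume (closedBall (cf (y : T)) (rf (y : T))) := by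
        rw [vol_cb _ (by positivity), vol_cb _ hry.le, ← ENNReal.ofReal_mul (by positivity)]
        congr 1
        rw [show 2*(4*rf (y : T)) = 4*(2*rf (y : T)) by ring, mul_pow]
      rw [hv4]
      gcongr
      calc volume (closedBall (cf (y : T)) (rf (y : T)))
          = (ENNReal.ofReal α)⁻¹ *
            (ENNReal.ofReal α * volume (closedBall (cf (y : T)) (rf (y : T)))) := by
            rw [← mul_assoc, ENNReal.inv_mul_cancel hαne0 hαnetop, one_mul]
      _ ≤ (ENNReal.ofReal α)⁻¹ * volume (E ∩ closedBall (cf (y : T)) (rf (y : T))) := by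
            gcongr
            exact (hb3 _).le
    have h3 : ∑' y : ↥u, volume (E ∩ closedBall (cf (y : T)) (rf (y : T))) ≤
        volume (E ∩ closedBall c (3*r)) := by
      have hmeq : volume (⋃ y ∈ u, E ∩ closedBall (cf y) (rf y)) =
          ∑' y : ↥u, volume (E ∩ closedBall (cf (y : T)) (rf (y : T))) :=
        measure_biUnion hcnt
          (fun i hi j hj hij => ((hu_disj hi hj hij).inter_left' E).inter_right' E)
          (fun y _ => hE.inter measurableSet_closedBall)
      rw [← hmeq]
      refine measure_mono (iUnion₂_subset fun y hy => inter_subset_inter_right E (hB3Q y))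
    have hTbound : volume T ≤
        ENNReal.ofReal ((4:ℝ)^n) * ((ENNReal.ofReal α)⁻¹ * volume (E ∩ closedBall c (3*r))) := by
      refine h1.trans ?_
      calc ∑' y : ↥u, volume (closedBall (cf (y : T)) (4 * rf (y : T)))
          ≤ ∑' y : ↥u, ENNReal.ofReal ((4:ℝ)^n) *
              ((ENNReal.ofReal α)⁻¹ * volume (E ∩ closedBall (cf (y : T)) (rf (y : T)))) :=
            ENNReal.tsum_le_tsum h2
      _ = ENNReal.ofReal ((4:ℝ)^n) * ((ENNReal.ofReal α)⁻¹ *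
            ∑' y : ↥u, volume (E ∩ closedBall (cf (y : T)) (rf (y : T)))) := by
            rw [ENNReal.tsum_mul_left, ENNReal.tsum_mul_left]
      _ ≤ _ := by gcongr
    -- put everything together
    rw [lint_ind hGopen.measurableSet]
    have hGQ : G ∩ Q = T := inter_comm _ _
    have hx3 : x ∈ closedBall c (3*r) := closedBall_subset_closedBall (by linarith) hx
    have hrat := ratio_le_maximalInd hE (show (0:ℝ) < 3*r by linarith) hx3
    calc (volume Q)⁻¹ * volume (G ∩ Q) = (volume Q)⁻¹ * volume T := by rw [hGQ]
    _ ≤ (volume Q)⁻¹ * (ENNReal.ofReal ((4:ℝ)^n) *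
          ((ENNReal.ofReal α)⁻¹ * volume (E ∩ closedBall c (3*r)))) := by gcongr
    _ = ENNReal.ofReal ((12:ℝ)^n / α) *
          ((volume (closedBall c (3*r)))⁻¹ * volume (E ∩ closedBall c (3*r))) := by
        rw [hQdef, vol_cb c hr.le, vol_cb c (show (0:ℝ) ≤ 3*r by linarith),
          ← ENNReal.ofReal_inv_of_pos (x := (2*r)^n) (by positivity),
          ← ENNReal.ofReal_inv_of_pos (x := (2*(3*r))^n) (by positivity),
          ← ENNReal.ofReal_inv_of_pos (x := α) hα]
        have hL : ENNReal.ofReal (((2*r)^n)⁻¹) * (ENNReal.ofReal ((4:ℝ)^n) *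
              (ENNReal.ofReal α⁻¹ * volume (E ∩ closedBall c (3*r)))) =
            ENNReal.ofReal (((2*r)^n)⁻¹ * (4:ℝ)^n * α⁻¹) *
              volume (E ∩ closedBall c (3*r)) := by
          rw [ENNReal.ofReal_mul (by positivity), ENNReal.ofReal_mul (by positivity)]
          ring
        have hR : ENNReal.ofReal ((12:ℝ)^n / α) * (ENNReal.ofReal ((((2*(3*r))^n))⁻¹) *
              volume (E ∩ closedBall c (3*r))) =
            ENNReal.ofReal ((12:ℝ)^n / α * (((2*(3*r))^n))⁻¹) *
              volume (E ∩ closedBall c (3*r)) := by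
          rw [ENNReal.ofReal_mul (by positivity)]
          ring
        rw [hL, hR]
        congr 2
        rw [show (12:ℝ)^n = 4^n * 3^n by rw [show (12:ℝ) = 4*3 by norm_num, mul_pow]]
        simp only [mul_pow]
        have h2n0 : ((2:ℝ)^n) ≠ 0 := by positivity
        have h3n0 : ((3:ℝ)^n) ≠ 0 := by positivity
        have h4n0 : ((4:ℝ)^n) ≠ 0 := by positivity
        have hrn0 : (r^n : ℝ) ≠ 0 := by positivity
        field_simp
    _ ≤ ENNReal.ofReal ((12:ℝ)^n / α) * maximalInd E x := by gcongr

end Stmt7Aux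

open Stmt7Aux in
/-- Suppose there are `0 < C < 1` and `0 < lam0 < 1` such that for every bounded
measurable `E` of positive measure,
`∫(Mχ_E)^p w ≤ C ∫(Mχ_{{Mχ_E>lam0}})^p w`. Then there are `C' > 0` and `δ > 0` such
that for all such `E` and every `λ ∈ (0,1)`,
`w(E) ≤ C' λ^δ ∫(Mχ_{{Mχ_E>λ}})^p w`. -/
theorem stmt7 {n : ℕ} (w : (Fin n → ℝ) → ℝ≥0∞) (p : ℝ) (hp : 0 < p)
    (C lam0 : ℝ) (hC0 : 0 < C) (hC1 : C < 1) (hlam0 : 0 < lam0) (hlam1 : lam0 < 1)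
    (h : ∀ E : Set (Fin n → ℝ), MeasurableSet E → IsBounded E → 0 < volume E →
      ∫⁻ x, (maximalInd E x) ^ p * w x ≤
        ENNReal.ofReal C *
          ∫⁻ x, (maximalInd {y | ENNReal.ofReal lam0 < maximalInd E y} x) ^ p * w x) :
    ∃ C' > (0:ℝ), ∃ δ > (0:ℝ),
      ∀ E : Set (Fin n → ℝ), MeasurableSet E → IsBounded E → 0 < volume E →
        ∀ l : ℝ, 0 < l → l < 1 →
          ∫⁻ x in E, w x ≤ ENNReal.ofReal (C' * l ^ δ) *
            ∫⁻ x, (maximalInd {y | ENNReal.ofReal l < maximalInd E y} x) ^ p * w x := by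
  classical
  set A : ℝ := (12:ℝ)^n with hA
  have hA1 : (1:ℝ) ≤ A := one_le_pow₀ (by norm_num)
  set q : ℝ := lam0 / A with hq
  have hq0 : 0 < q := by positivity
  have hq1 : q < 1 := by
    rw [hq, div_lt_one (by positivity)]; linarith
  set δ : ℝ := Real.log C / Real.log q with hδ
  have hlogC : Real.log C < 0 := Real.log_neg hC0 hC1
  have hlogq : Real.log q < 0 := Real.log_neg hq0 hq1
  have hδpos : 0 < δ := div_pos_of_neg_of_neg hlogC hlogq
  have hqδ : q ^ δ = C := by
    rw [hδ, Real.rpow_def_of_pos hq0, mul_comm, div_mul_cancel₀ _ hlogq.ne]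
    exact Real.exp_log hC0
  set C' : ℝ := lam0 ^ (-δ) / C with hC'
  have hC'pos : 0 < C' := div_pos (Real.rpow_pos_of_pos hlam0 _) hC0
  refine ⟨C', hC'pos, δ, hδpos, ?_⟩
  intro E hE hEb hEpos l hl0 hl1
  set H : ℝ → Set (Fin n → ℝ) := fun t => {y | ENNReal.ofReal t < maximalInd E y} with hH
  set I : ℝ → ℝ≥0∞ := fun t => ∫⁻ x, (maximalInd (H t) x) ^ p * w x with hIdef
  -- base estimate
  have base : ∀ t : ℝ, 0 < t → t < 1 → ∫⁻ x in E, w x ≤ I t := by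
    intro t ht0 ht1
    have hHopen : IsOpen (H t) := Stmt7Aux.isOpen_maximal_gt _ _
    have hnull : volume (E \ H t) = 0 := Stmt7Aux.ae_mem_H hE ht1
    have h1 : ∫⁻ x in E, w x ≤ ∫⁻ x in (H t ∪ E \ H t), w x :=
      lintegral_mono_set (fun y hy => by
        by_cases hyH : y ∈ H t
        · exact Or.inl hyH
        · exact Or.inr ⟨hy, hyH⟩)
    have h2 : ∫⁻ x in (H t ∪ E \ H t), w x ≤
        (∫⁻ x in H t, w x) + ∫⁻ x in E \ H t, w x :=
      lintegral_union_le _ _ _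
    have h3 : ∫⁻ x in E \ H t, w x = 0 := setLIntegral_measure_zero _ _ hnull
    have h4 : ∫⁻ x in H t, w x ≤ I t := by
      rw [← lintegral_indicator hHopen.measurableSet]
      refine lintegral_mono fun x => ?_
      by_cases hx : x ∈ H t
      · rw [indicator_of_mem hx]
        have h5 : (1:ℝ≥0∞) ≤ (maximalInd (H t) x) ^ p :=
          ENNReal.one_le_rpow (Stmt7Aux.one_le_maximalInd_of_open hHopen hx) hp
        calc w x = 1 * w x := (one_mul _).symm
        _ ≤ (maximalInd (H t) x) ^ p * w x := by gcongr
      · rw [indicator_of_notMem hx]; exact zero_le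
    calc ∫⁻ x in E, w x ≤ (∫⁻ x in H t, w x) + ∫⁻ x in E \ H t, w x := h1.trans h2
    _ = ∫⁻ x in H t, w x := by rw [h3, add_zero]
    _ ≤ I t := h4
  -- monotonicity of I
  have Imono : ∀ s t : ℝ, s ≤ t → I t ≤ I s := by
    intro s t hst
    refine lintegral_mono fun x => ?_
    have hHsub : H t ⊆ H s := fun y hy =>
      lt_of_le_of_lt (ENNReal.ofReal_le_ofReal hst) hy
    exact mul_le_mul_left
      (ENNReal.rpow_le_rpow (Stmt7Aux.maximalInd_mono hHsub x) hp.le) _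
  -- iteration
  have chain : ∀ k : ℕ, ∫⁻ x in E, w x ≤ ENNReal.ofReal (C^k) * I (lam0 * q^k) := by
    intro k
    induction k with
    | zero => simpa using base lam0 hlam0 hlam1
    | succ k ih =>
      have hβ0 : 0 < lam0 * q^k := by positivity
      have hβ1 : lam0 * q^k ≤ lam0 := by
        nth_rewrite 2 [← mul_one lam0]
        gcongr
        exact pow_le_one₀ hq0.le hq1.le
      have hGopen : IsOpen (H (lam0*q^k)) := Stmt7Aux.isOpen_maximal_gt _ _
      have hGbd : IsBounded (H (lam0*q^k)) := Stmt7Aux.isBounded_H hEb hβ0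
      have hGpos : 0 < volume (H (lam0*q^k)) := by
        have hnull : volume (E \ H (lam0*q^k)) = 0 :=
          Stmt7Aux.ae_mem_H hE (lt_of_le_of_lt hβ1 hlam1)
        have hle : volume E ≤ volume (H (lam0*q^k)) + volume (E \ H (lam0*q^k)) := by
          refine (measure_mono ?_).trans (measure_union_le _ _)
          intro y hy
          by_cases hyH : y ∈ H (lam0*q^k)
          · exact Or.inl hyH
          · exact Or.inr ⟨hy, hyH⟩
        rw [hnull, add_zero] at hle
        exact lt_of_lt_of_le hEpos hle
      have happ := h (H (lam0*q^k)) hGopen.measurableSet hGbd hGpos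
      have hincl : {y | ENNReal.ofReal lam0 < maximalInd (H (lam0*q^k)) y} ⊆
          H (lam0*q^(k+1)) := by
        intro y hy
        rw [mem_setOf_eq] at hy
        have hkey := Stmt7Aux.key hE hβ0 y
        have h1 : ENNReal.ofReal lam0 <
            ENNReal.ofReal (A / (lam0*q^k)) * maximalInd E y := lt_of_lt_of_le hy hkey
        have hKne0 : ENNReal.ofReal (A/(lam0*q^k)) ≠ 0 := by
          rw [← ENNReal.ofReal_zero, Ne, ENNReal.ofReal_eq_ofReal_iff (by positivity) le_rfl]
          positivity
        have h2 : ENNReal.ofReal lam0 / ENNReal.ofReal (A/(lam0*q^k)) < maximalInd E y :=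
          (ENNReal.div_lt_iff (Or.inl hKne0) (Or.inl ENNReal.ofReal_ne_top)).2
            (by rwa [mul_comm] at h1)
        have h3 : ENNReal.ofReal (lam0 * q^(k+1)) =
            ENNReal.ofReal lam0 / ENNReal.ofReal (A/(lam0*q^k)) := by
          rw [← ENNReal.ofReal_div_of_pos (by positivity)]
          congr 1
          rw [hq]
          field_simp [(ne_of_gt (by linarith) : A ≠ 0)]
          have hA0 : A ≠ 0 := ne_of_gt (by linarith)
          have hAl : A * (lam0 / A) = lam0 := by field_simp
          rw [pow_succ, mul_comm ((lam0 / A) ^ k), ← mul_assoc, hAl]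
        show ENNReal.ofReal (lam0 * q^(k+1)) < maximalInd E y
        rw [h3]
        exact h2
      have hstep : I (lam0*q^k) ≤ ENNReal.ofReal C * I (lam0*q^(k+1)) := by
        refine happ.trans ?_
        gcongr
        refine lintegral_mono fun x => ?_
        exact mul_le_mul_left
          (ENNReal.rpow_le_rpow (Stmt7Aux.maximalInd_mono hincl x) hp.le) _
      calc ∫⁻ x in E, w x ≤ ENNReal.ofReal (C^k) * I (lam0 * q^k) := ih
      _ ≤ ENNReal.ofReal (C^k) * (ENNReal.ofReal C * I (lam0*q^(k+1))) := by gcongr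
      _ = ENNReal.ofReal (C^(k+1)) * I (lam0*q^(k+1)) := by
          rw [← mul_assoc, ← ENNReal.ofReal_mul (by positivity), ← pow_succ]
  -- conclusion
  rcases le_or_gt l lam0 with hll | hll
  · have hex : ∃ k : ℕ, lam0 * q^k < l := by
      obtain ⟨k, hk⟩ := exists_pow_lt_of_lt_one (show (0:ℝ) < l/lam0 by positivity) hq1
      refine ⟨k, ?_⟩
      rw [mul_comm]
      exact (lt_div_iff₀ hlam0).1 hk
    set k := Nat.find hex with hkdef
    have hkspec : lam0 * q^k < l := Nat.find_spec hex
    have hkpos : k ≠ 0 := by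
      intro h0
      rw [h0, pow_zero, mul_one] at hkspec
      exact absurd hkspec (not_lt.2 hll)
    obtain ⟨m, hm⟩ := Nat.exists_eq_succ_of_ne_zero hkpos
    have hmin : ¬ (lam0 * q^m < l) := Nat.find_min hex (by omega)
    push_neg at hmin
    have h1 : I (lam0 * q^m) ≤ I l := Imono l (lam0*q^m) hmin
    have h2 : ∫⁻ x in E, w x ≤ ENNReal.ofReal (C^m) * I l := by
      refine (chain m).trans ?_
      gcongr
    have h3 : C^m ≤ C' * l^δ := by
      have hlδ : lam0^δ * C^k ≤ l^δ := by
        have hmono := Real.rpow_le_rpow (by positivity) hkspec.le hδpos.le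
        rw [Real.mul_rpow hlam0.le (by positivity), ← Real.rpow_natCast q k,
          ← Real.rpow_mul hq0.le, mul_comm (k:ℝ) δ, Real.rpow_mul hq0.le, hqδ,
          Real.rpow_natCast] at hmono
        exact hmono
      have hC'eq : C^m = (lam0 ^ (-δ) / C) * (lam0^δ * C^k) := by
        rw [hm, Real.rpow_neg hlam0.le]
        have hlam0δ : (0:ℝ) < lam0 ^ δ := Real.rpow_pos_of_pos hlam0 δ
        field_simp
        rw [Nat.succ_eq_add_one]; ring
      rw [hC'eq, hC']
      gcongr
    refine h2.trans ?_
    exact mul_le_mul_left (ENNReal.ofReal_le_ofReal h3) _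
  · have hb := base l hl0 hl1
    have h1 : (1:ℝ≥0∞) ≤ ENNReal.ofReal (C' * l^δ) := by
      rw [ENNReal.one_le_ofReal]
      have hlδ : lam0^δ ≤ l^δ := Real.rpow_le_rpow hlam0.le hll.le hδpos.le
      have hlam0δ : (0:ℝ) < lam0 ^ δ := Real.rpow_pos_of_pos hlam0 δ
      calc (1:ℝ) ≤ 1/C := by rw [le_div_iff₀ hC0]; linarith
      _ = lam0^(-δ)/C * lam0^δ := by
          rw [Real.rpow_neg hlam0.le]
          field_simp
      _ ≤ C' * l^δ := by rw [hC']; gcongr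
    refine hb.trans ?_
    exact le_mul_of_one_le_left zero_le h1
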